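/- More generally, with pilot contamination, C = R − p τ_p R Ψ⁻¹ R is positive semidefinite where Ψ = Σ_{l ∈ P} p_l τ_p R_l + σ² I, provided each R_l is Hermitian positive semidefinite, p = p_k for some k ∈ P, and σ² > 0: since Ψ ⪰ p τ_p R in the Loewner order, R Ψ⁻¹ R ⪯ (1/(p τ_p)) R... specifically p τ_p R Ψ⁻¹ R ⪯ R. -/

import Mathlib

open Matrix ComplexOrder
open scoped MatrixOrder

lemma smul_psd {n : Type*} [Fintype n] {M : Matrix n n ℂ} (hM : M.PosSemidef) {r : ℝ}
    (hr : 0 ≤ r) : ((r : ℂ) • M).PosSemidef := by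
  refine Matrix.PosSemidef.of_dotProduct_mulVec_nonneg ?_ ?_
  · unfold Matrix.IsHermitian
    rw [conjTranspose_smul, hM.1]
    congr 1
    simp
  · intro x
    rw [smul_mulVec, dotProduct_smul]
    exact mul_nonneg (by exact_mod_cast hr) (hM.dotProduct_mulVec_nonneg x)

set_option maxHeartbeats 1000000

/-- Error covariance with pilot contamination:
`C = R_k - p_k τ_p R_k Ψ⁻¹ R_k` is positive semidefinite, where
`Ψ = Σ_{l ∈ P} p_l τ_p R_l + σ² I`. -/
theorem error_covariance_psd_pilot_contamination {N : ℕ} {ι : Type*}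
    (P : Finset ι) (R : ι → Matrix (Fin N) (Fin N) ℂ)
    (hR : ∀ l ∈ P, (R l).PosSemidef)
    (p : ι → ℝ) (hp : ∀ l ∈ P, 0 < p l)
    (τp σsq : ℝ) (hτ : 0 < τp) (hσ : 0 < σsq)
    (k : ι) (hk : k ∈ P) :
    (R k - (p k * τp : ℂ) •
        (R k *
          ((∑ l ∈ P, (p l * τp : ℂ) • R l) +
            (σsq : ℂ) • (1 : Matrix (Fin N) (Fin N) ℂ))⁻¹ * R k)).PosSemidef := by
  classical
  set Ψ : Matrix (Fin N) (Fin N) ℂ :=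
    (∑ l ∈ P, (p l * τp : ℂ) • R l) + (σsq : ℂ) • (1 : Matrix (Fin N) (Fin N) ℂ) with hΨdef
  set c : ℝ := p k * τp with hcdef
  have hc : 0 < c := mul_pos (hp k hk) hτ
  have hcC : ((c : ℂ)) ≠ 0 := by exact_mod_cast hc.ne'
  set A : Matrix (Fin N) (Fin N) ℂ := (c : ℂ) • R k with hAdef
  have hA : A.PosSemidef := smul_psd (hR k hk) hc.le
  -- each summand is psd
  have hsummand : ∀ l ∈ P, ((p l * τp : ℂ) • R l).PosSemidef := fun l hl => by
    have := smul_psd (hR l hl) (mul_pos (hp l hl) hτ).le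
    simpa using this
  -- Ψ is positive definite
  have hσ1 : ((σsq : ℂ) • (1 : Matrix (Fin N) (Fin N) ℂ)).PosDef := by
    have h1 : (1 : Matrix (Fin N) (Fin N) ℂ).PosDef := Matrix.PosDef.one
    refine Matrix.PosDef.of_dotProduct_mulVec_pos (smul_psd h1.posSemidef hσ.le).1 (fun x hx => ?_)
    rw [smul_mulVec, dotProduct_smul]
    exact mul_pos (by exact_mod_cast hσ) (h1.dotProduct_mulVec_pos hx)
  have hΨ : Ψ.PosDef := by
    refine Matrix.PosDef.posSemidef_add ?_ hσ1
    exact Finset.sum_induction _ _ (fun a b ha hb => ha.add hb)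
      (Matrix.PosSemidef.zero) hsummand
  -- Ψ - A is psd
  have hsub : (Ψ - A).PosSemidef := by
    have : Ψ - A = (∑ l ∈ P.erase k, (p l * τp : ℂ) • R l) +
        (σsq : ℂ) • (1 : Matrix (Fin N) (Fin N) ℂ) := by
      rw [hΨdef, ← Finset.sum_erase_add P _ hk, hAdef, hcdef]
      push_cast
      abel
    rw [this]
    refine Matrix.PosSemidef.add ?_ hσ1.posSemidef
    exact Finset.sum_induction _ _ (fun a b ha hb => ha.add hb)
      (Matrix.PosSemidef.zero) (fun l hl => hsummand l (Finset.mem_of_mem_erase hl))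
  -- square root of Ψ
  set Q : Matrix (Fin N) (Fin N) ℂ := CFC.sqrt Ψ with hQdef
  have hQpsd : Q.PosSemidef := (CFC.sqrt_nonneg Ψ).posSemidef
  have hQQ : Q * Q = Ψ := CFC.sqrt_mul_sqrt_self Ψ hΨ.posSemidef.nonneg
  have hQu : IsUnit Q.det := by
    have hdet : Q.det * Q.det = Ψ.det := by rw [← det_mul, hQQ]
    have : Ψ.det ≠ 0 := hΨ.det_pos.ne'
    exact isUnit_iff_ne_zero.2 (fun h => this (by rw [← hdet, h, mul_zero]))
  have hQinvH : (Q⁻¹)ᴴ = Q⁻¹ := by rw [conjTranspose_nonsing_inv, hQpsd.1]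
  have hQH : Qᴴ = Q := hQpsd.1
  have hQiQ : Q⁻¹ * Q = 1 := nonsing_inv_mul Q hQu
  have hQQi : Q * Q⁻¹ = 1 := mul_nonsing_inv Q hQu
  have hΨinv : Ψ⁻¹ = Q⁻¹ * Q⁻¹ := by rw [← hQQ, Matrix.mul_inv_rev]
  -- S = Q⁻¹ A Q⁻¹
  set S : Matrix (Fin N) (Fin N) ℂ := Q⁻¹ * A * Q⁻¹ with hSdef
  have hS : S.PosSemidef := by
    have := hA.conjTranspose_mul_mul_same Q⁻¹
    rwa [hQinvH] at this
  have h1S : ((1 : Matrix (Fin N) (Fin N) ℂ) - S).PosSemidef := by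
    have h := hsub.conjTranspose_mul_mul_same Q⁻¹
    rw [hQinvH] at h
    have : Q⁻¹ * (Ψ - A) * Q⁻¹ = 1 - S := by
      rw [Matrix.mul_sub, Matrix.sub_mul, hSdef, ← hQQ]
      rw [show Q⁻¹ * (Q * Q) * Q⁻¹ = (Q⁻¹ * Q) * (Q * Q⁻¹) by noncomm_ring]
      rw [hQiQ, hQQi, one_mul]
    rwa [this] at h
  -- S - S*S is psd
  set T : Matrix (Fin N) (Fin N) ℂ := CFC.sqrt S with hTdef
  have hTT : T * T = S := CFC.sqrt_mul_sqrt_self S hS.nonneg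
  have hTH : Tᴴ = T := (CFC.sqrt_nonneg S).posSemidef.1
  have hSS : (S - S * S).PosSemidef := by
    have h := h1S.conjTranspose_mul_mul_same T
    rw [hTH] at h
    have : T * (1 - S) * T = S - S * S := by
      rw [← hTT]; noncomm_ring
    rwa [this] at h
  -- conjugate back
  have hfinal : (A - A * Ψ⁻¹ * A).PosSemidef := by
    have h := hSS.conjTranspose_mul_mul_same Q
    rw [hQH] at h
    have e1 : Q * S * Q = A := by
      rw [hSdef]
      simp only [Matrix.mul_assoc]
      rw [hQiQ, Matrix.mul_one, ← Matrix.mul_assoc, hQQi, Matrix.one_mul]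
    have e2 : Q * (S * S) * Q = A * Ψ⁻¹ * A := by
      rw [hSdef, hΨinv]
      simp only [Matrix.mul_assoc]
      rw [hQiQ, Matrix.mul_one, ← Matrix.mul_assoc Q Q⁻¹, hQQi]
      try rw [Matrix.one_mul]
    have : Q * (S - S * S) * Q = A - A * Ψ⁻¹ * A := by
      rw [Matrix.mul_sub, Matrix.sub_mul, e1, ← e2]
    rwa [this] at h
  -- rescale
  have hgoal : ((c⁻¹ : ℝ) : ℂ) • (A - A * Ψ⁻¹ * A)
      = R k - (p k * τp : ℂ) • (R k * Ψ⁻¹ * R k) := by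
    have hcc : ((p k : ℂ) * (τp : ℂ)) = (c : ℂ) := by rw [hcdef, Complex.ofReal_mul]
    rw [hcc, hAdef]
    simp only [Matrix.smul_mul, Matrix.mul_smul, smul_smul, smul_sub]
    push_cast
    congr 1
    · rw [inv_mul_cancel₀ hcC, one_smul]
    · congr 1
      field_simp
  have := smul_psd hfinal (inv_nonneg.2 hc.le)
  rwa [hgoal] at this
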